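/- Let S be a K-algebra with a pseudo-degree function χ and let a ∈ S with χ(a) = m > 0 be such that C_S(a) satisfies condition D(1). Then C_S(a) is a commutative subalgebra of S. -/

import Mathlib

open Polynomial

/-- A pseudo-degree function on a ring `S`: a valuation-like map
`χ : S → ℤ ∪ {-∞}` with `χ a = -∞ ↔ a = 0`, `χ (ab) = χ a + χ b` and
`χ (a+b) ≤ max (χ a) (χ b)`. -/
structure IsPseudoDegree {S : Type*} [Ring S] (χ : S → WithBot ℤ) : Prop where
  eq_bot_iff : ∀ a : S, χ a = ⊥ ↔ a = 0
  map_mul : ∀ a b : S, χ (a * b) = χ a + χ b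
  add_le : ∀ a b : S, χ (a + b) ≤ max (χ a) (χ b)

/-- Condition `D(ℓ)` for a subalgebra `B` of `S`: every nonzero element of `B`
has `χ`-value `≥ 0`, and any `ℓ+1` elements of `B` all mapped to the same
integer by `χ` admit a nontrivial `K`-linear combination of strictly smaller
`χ`-value. -/
def CondD {K S : Type*} [Field K] [Ring S] [Algebra K S] (χ : S → WithBot ℤ)
    (B : Subalgebra K S) (ℓ : ℕ) : Prop :=
  (∀ b ∈ B, b ≠ 0 → 0 ≤ χ b) ∧
  ∀ b : Fin (ℓ + 1) → S, (∀ i, b i ∈ B) → (∀ i, χ (b i) = χ (b 0)) → χ (b 0) ≠ ⊥ →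
    ∃ α : Fin (ℓ + 1) → K, α ≠ 0 ∧ χ (∑ i, α i • b i) < χ (b 0)

namespace Stmt9Aux


/-- A biadditive pairing on a sub-semigroup of `ℤ` (containing `0` and a positive
element) with values in a commutative group, trivial on the diagonal, is trivial. -/
theorem pairing_trivial {A : Type*} [CommGroup A] (E : Set ℤ)
    (h0 : (0:ℤ) ∈ E) (hadd : ∀ {s t : ℤ}, s ∈ E → t ∈ E → s + t ∈ E)
    (μ : ℤ) (hμ : μ ∈ E) (hμpos : 0 < μ)
    (f : ℤ → ℤ → A)
    (hfl : ∀ {s t u}, s ∈ E → t ∈ E → u ∈ E → f (s+t) u = f s u * f t u)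
    (hfr : ∀ {s t u}, s ∈ E → t ∈ E → u ∈ E → f s (t+u) = f s t * f s u)
    (hdiag : ∀ {s}, s ∈ E → f s s = 1) :
    ∀ {s t}, s ∈ E → t ∈ E → f s t = 1 := by
  classical
  -- f s 0 = 1 and f 0 t = 1
  have hf0r : ∀ {s}, s ∈ E → f s 0 = 1 := by
    intro s hs
    have h := hfr hs h0 h0
    rw [add_zero] at h
    exact (mul_left_cancel (a := f s 0) (by rw [mul_one, ← h])).symm
  have hf0l : ∀ {t}, t ∈ E → f 0 t = 1 := by
    intro t ht
    have h := hfl h0 h0 ht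
    rw [add_zero] at h
    exact (mul_left_cancel (a := f 0 t) (by rw [mul_one, ← h])).symm
  -- antisymmetry
  have hanti : ∀ {s t}, s ∈ E → t ∈ E → f s t * f t s = 1 := by
    intro s t hs ht
    have h1 : f (s+t) (s+t) = (f s s * f s t) * (f t s * f t t) := by
      rw [hfl hs ht (hadd hs ht), hfr hs hs ht, hfr ht hs ht]
    rw [hdiag (hadd hs ht), hdiag hs, hdiag ht, one_mul, mul_one] at h1
    exact h1.symm
  -- the difference set
  set D : Set ℤ := {ξ | ∃ s, s ∈ E ∧ ∃ t, t ∈ E ∧ ξ = s - t} with hD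
  have hDofE : ∀ {n}, n ∈ E → n ∈ D := fun {n} hn => ⟨n, hn, 0, h0, by ring⟩
  have hD0 : (0:ℤ) ∈ D := hDofE h0
  have hDadd : ∀ {ξ η}, ξ ∈ D → η ∈ D → ξ + η ∈ D := by
    rintro ξ η ⟨s, hs, t, ht, rfl⟩ ⟨s', hs', t', ht', rfl⟩
    exact ⟨s + s', hadd hs hs', t + t', hadd ht ht', by ring⟩
  have hDneg : ∀ {ξ}, ξ ∈ D → -ξ ∈ D := by
    rintro ξ ⟨s, hs, t, ht, rfl⟩
    exact ⟨t, ht, s, hs, by ring⟩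
  have hDsub : ∀ {ξ η}, ξ ∈ D → η ∈ D → ξ - η ∈ D := by
    intro ξ η h1 h2
    have := hDadd h1 (hDneg h2)
    simpa [sub_eq_add_neg] using this
  have hDsmul : ∀ (r : ℤ) {ξ}, ξ ∈ D → r * ξ ∈ D := by
    intro r
    induction r using Int.induction_on with
    | zero => intro ξ _; simpa using hD0
    | succ n ih => intro ξ h; have := hDadd (ih h) h; simpa [add_mul] using this
    | pred n ih => intro ξ h; have := hDsub (ih h) h; simpa [sub_mul] using this
  -- least positive element
  obtain ⟨d, ⟨hdD, hdpos⟩, hdmin⟩ :=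
    Int.exists_least_of_bdd (P := fun z => z ∈ D ∧ 0 < z)
      ⟨1, fun z hz => hz.2⟩ ⟨μ, hDofE hμ, hμpos⟩
  have hdvd : ∀ {ξ}, ξ ∈ D → d ∣ ξ := by
    intro ξ hξ
    have hmem : ξ % d ∈ D := by
      have : ξ % d = ξ - (ξ / d) * d := by rw [Int.emod_def]; ring
      rw [this]
      exact hDsub hξ (hDsmul _ hdD)
    rcases lt_or_eq_of_le (Int.emod_nonneg ξ (ne_of_gt hdpos)) with h | h
    · exact absurd (hdmin _ ⟨hmem, h⟩) (not_le.mpr (Int.emod_lt_of_pos ξ hdpos))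
    · exact Int.dvd_of_emod_eq_zero h.symm
  -- choose representatives
  have hrep : ∀ ξ : ℤ, ∃ s t, ξ ∈ D → (s ∈ E ∧ t ∈ E ∧ ξ = s - t) := by
    intro ξ
    by_cases h : ξ ∈ D
    · obtain ⟨s, hs, t, ht, he⟩ := h; exact ⟨s, t, fun _ => ⟨hs, ht, he⟩⟩
    · exact ⟨0, 0, fun hh => absurd hh h⟩
  choose S1 T1 hrep' using hrep
  set G : ℤ → ℤ → ℤ → ℤ → A :=
    fun s t v w => (f s v / f t v) / (f s w / f t w) with hG
  set F : ℤ → ℤ → A := fun ξ η => G (S1 ξ) (T1 ξ) (S1 η) (T1 η) with hF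
  -- representative independence, left slot
  have hGl : ∀ {s t s' t' v w}, s ∈ E → t ∈ E → s' ∈ E → t' ∈ E → v ∈ E → w ∈ E →
      s + t' = s' + t → G s t v w = G s' t' v w := by
    intro s t s' t' v w hs ht hs' ht' hv hw hst
    have key : ∀ {u}, u ∈ E → f s u / f t u = f s' u / f t' u := by
      intro u hu
      have h1 : f s u * f t' u = f s' u * f t u := by
        rw [← hfl hs ht' hu, ← hfl hs' ht hu, hst]
      rw [div_eq_div_iff_mul_eq_mul]
      exact h1
    rw [hG]; dsimp only; rw [key hv, key hw]
  have hGr : ∀ {s t v w v' w'}, s ∈ E → t ∈ E → v ∈ E → w ∈ E → v' ∈ E → w' ∈ E →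
      v + w' = v' + w → G s t v w = G s t v' w' := by
    intro s t v w v' w' hs ht hv hw hv' hw' hvw
    have key : ∀ {u}, u ∈ E → f u v / f u w = f u v' / f u w' := by
      intro u hu
      have h1 : f u v * f u w' = f u v' * f u w := by
        rw [← hfr hu hv hw', ← hfr hu hv' hw, hvw]
      rw [div_eq_div_iff_mul_eq_mul]
      exact h1
    rw [hG]; dsimp only
    rw [div_div_div_comm, key hs, key ht, ← div_div_div_comm]
  -- compute F at given representatives
  have hSmem : ∀ {ξ}, ξ ∈ D → S1 ξ ∈ E := fun {ξ} h => (hrep' ξ h).1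
  have hTmem : ∀ {ξ}, ξ ∈ D → T1 ξ ∈ E := fun {ξ} h => (hrep' ξ h).2.1
  have hSTeq : ∀ {ξ}, ξ ∈ D → ξ = S1 ξ - T1 ξ := fun {ξ} h => (hrep' ξ h).2.2
  have hFrep : ∀ {ξ η s t}, ξ ∈ D → η ∈ D → s ∈ E → t ∈ E → ξ = s - t →
      F ξ η = G s t (S1 η) (T1 η) := by
    intro ξ η s t hξ hη hs ht he
    refine hGl (hSmem hξ) (hTmem hξ) hs ht (hSmem hη) (hTmem hη) ?_
    have h1 := hSTeq hξ
    omega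
  have hFrep2 : ∀ {ξ η s t v w}, ξ ∈ D → η ∈ D → s ∈ E → t ∈ E → ξ = s - t →
      v ∈ E → w ∈ E → η = v - w → F ξ η = G s t v w := by
    intro ξ η s t v w hξ hη hs ht he hv hw he'
    rw [hFrep hξ hη hs ht he]
    refine hGr hs ht (hSmem hη) (hTmem hη) hv hw ?_
    have h1 := hSTeq hη
    omega
  -- additivity of F
  have hFaddl : ∀ {ξ ξ' η}, ξ ∈ D → ξ' ∈ D → η ∈ D → F (ξ + ξ') η = F ξ η * F ξ' η := by
    intro ξ ξ' η hξ hξ' hη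
    have h1 : F (ξ + ξ') η = G (S1 ξ + S1 ξ') (T1 ξ + T1 ξ') (S1 η) (T1 η) := by
      refine hFrep (hDadd hξ hξ') hη (hadd (hSmem hξ) (hSmem hξ')) (hadd (hTmem hξ) (hTmem hξ')) ?_
      have h2 := hSTeq hξ; have h3 := hSTeq hξ'; omega
    rw [h1, hF, hG]; dsimp only
    rw [hfl (hSmem hξ) (hSmem hξ') (hSmem hη), hfl (hTmem hξ) (hTmem hξ') (hSmem hη),
      hfl (hSmem hξ) (hSmem hξ') (hTmem hη), hfl (hTmem hξ) (hTmem hξ') (hTmem hη)]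
    rw [mul_div_mul_comm, mul_div_mul_comm, mul_div_mul_comm]
  have hFaddr : ∀ {ξ η η'}, ξ ∈ D → η ∈ D → η' ∈ D → F ξ (η + η') = F ξ η * F ξ η' := by
    intro ξ η η' hξ hη hη'
    have h1 : F ξ (η + η') = G (S1 ξ) (T1 ξ) (S1 η + S1 η') (T1 η + T1 η') := by
      refine hFrep2 hξ (hDadd hη hη') (hSmem hξ) (hTmem hξ) (hSTeq hξ)
        (hadd (hSmem hη) (hSmem hη')) (hadd (hTmem hη) (hTmem hη')) ?_
      have h2 := hSTeq hη; have h3 := hSTeq hη'; omega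
    rw [h1, hF, hG]; dsimp only
    rw [hfr (hSmem hξ) (hSmem hη) (hSmem hη'), hfr (hSmem hξ) (hTmem hη) (hTmem hη'),
      hfr (hTmem hξ) (hSmem hη) (hSmem hη'), hfr (hTmem hξ) (hTmem hη) (hTmem hη')]
    rw [mul_div_mul_comm, mul_div_mul_comm, mul_div_mul_comm]
  have hF0l : ∀ {η}, η ∈ D → F 0 η = 1 := by
    intro η hη
    have h := hFaddl hD0 hD0 hη
    rw [add_zero] at h
    exact (mul_left_cancel (a := F 0 η) (by rw [mul_one, ← h])).symm
  have hF0r : ∀ {ξ}, ξ ∈ D → F ξ 0 = 1 := by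
    intro ξ hξ
    have h := hFaddr hξ hD0 hD0
    rw [add_zero] at h
    exact (mul_left_cancel (a := F ξ 0) (by rw [mul_one, ← h])).symm
  -- powers
  have hFsmull : ∀ (r : ℤ) {ξ η}, ξ ∈ D → η ∈ D → F (r * ξ) η = (F ξ η) ^ r := by
    intro r
    induction r using Int.induction_on with
    | zero => intro ξ η hξ hη; simpa using hF0l hη
    | succ n ih =>
        intro ξ η hξ hη
        have : ((n:ℤ)+1) * ξ = (n:ℤ) * ξ + ξ := by ring
        rw [this, hFaddl (hDsmul _ hξ) hξ hη, ih hξ hη, zpow_add_one]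
    | pred n ih =>
        intro ξ η hξ hη
        have : (-(n:ℤ)-1) * ξ = (-(n:ℤ)) * ξ - ξ := by ring
        rw [this, sub_eq_add_neg]
        have hneg : F (-ξ) η = (F ξ η)⁻¹ := by
          have h := hFaddl hξ (hDneg hξ) hη
          rw [add_neg_cancel, hF0l hη] at h
          rw [eq_comm, inv_eq_iff_mul_eq_one, ← h]
        rw [hFaddl (hDsmul _ hξ) (hDneg hξ) hη, ih hξ hη, hneg, zpow_sub_one]
  have hFsmulr : ∀ (r : ℤ) {ξ η}, ξ ∈ D → η ∈ D → F ξ (r * η) = (F ξ η) ^ r := by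
    intro r
    induction r using Int.induction_on with
    | zero => intro ξ η hξ hη; simpa using hF0r hξ
    | succ n ih =>
        intro ξ η hξ hη
        have : ((n:ℤ)+1) * η = (n:ℤ) * η + η := by ring
        rw [this, hFaddr hξ (hDsmul _ hη) hη, ih hξ hη, zpow_add_one]
    | pred n ih =>
        intro ξ η hξ hη
        have : (-(n:ℤ)-1) * η = (-(n:ℤ)) * η - η := by ring
        rw [this, sub_eq_add_neg]
        have hneg : F ξ (-η) = (F ξ η)⁻¹ := by
          have h := hFaddr hξ hη (hDneg hη)
          rw [add_neg_cancel, hF0r hξ] at h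
          rw [eq_comm, inv_eq_iff_mul_eq_one, ← h]
        rw [hFaddr hξ (hDsmul _ hη) (hDneg hη), ih hξ hη, hneg, zpow_sub_one]
  -- F d d = 1
  have hFdd : F d d = 1 := by
    have h1 : F d d = G (S1 d) (T1 d) (S1 d) (T1 d) := rfl
    rw [h1, hG]; dsimp only
    rw [hdiag (hSmem hdD), hdiag (hTmem hdD)]
    have h2 := hanti (hSmem hdD) (hTmem hdD)
    rw [div_eq_one, one_div, div_one, inv_eq_iff_mul_eq_one, mul_comm]
    exact h2
  -- conclusion
  intro s t hs ht
  have hsD := hDofE hs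
  have htD := hDofE ht
  have hfst : f s t = F s t := by
    have h1 : F s t = G s 0 t 0 :=
      hFrep2 hsD htD hs h0 (by ring) ht h0 (by ring)
    rw [h1, hG]; dsimp only
    rw [hf0l ht, hf0r hs, hf0r h0]
    simp
  obtain ⟨ks, hks⟩ := hdvd hsD
  obtain ⟨kt, hkt⟩ := hdvd htD
  have hs' : s = ks * d := by rw [hks]; ring
  have ht' : t = kt * d := by rw [hkt]; ring
  rw [hfst, hs', ht', hFsmull ks hdD (by rw [← ht']; exact htD),
    hFsmulr kt hdD hdD, hFdd]
  simp


/-! ### WithBot ℤ helpers -/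

lemma wb_add_le {u v : WithBot ℤ} {p q : ℤ} (h1 : u ≤ (p:WithBot ℤ)) (h2 : v ≤ (q:WithBot ℤ)) :
    u + v ≤ ((p+q : ℤ) : WithBot ℤ) := by
  induction u using WithBot.recBotCoe with
  | bot => simp
  | coe x =>
    induction v using WithBot.recBotCoe with
    | bot => simp
    | coe y =>
      rw [← WithBot.coe_add, WithBot.coe_le_coe] at *
      omega

lemma wb_add_lt_r {u v : WithBot ℤ} {p q : ℤ} (h1 : u ≤ (p:WithBot ℤ) ) (h2 : v < (q:WithBot ℤ)) :
    u + v < ((p+q : ℤ) : WithBot ℤ) := by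
  induction u using WithBot.recBotCoe with
  | bot => rw [WithBot.bot_add]; exact WithBot.bot_lt_coe _
  | coe x =>
    induction v using WithBot.recBotCoe with
    | bot => rw [WithBot.add_bot]; exact WithBot.bot_lt_coe _
    | coe y =>
      rw [← WithBot.coe_add, WithBot.coe_lt_coe]
      rw [WithBot.coe_le_coe] at h1
      rw [WithBot.coe_lt_coe] at h2
      omega

lemma wb_add_lt_l {u v : WithBot ℤ} {p q : ℤ} (h1 : u < (p:WithBot ℤ)) (h2 : v ≤ (q:WithBot ℤ)) :
    u + v < ((p+q : ℤ) : WithBot ℤ) := by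
  induction u using WithBot.recBotCoe with
  | bot => rw [WithBot.bot_add]; exact WithBot.bot_lt_coe _
  | coe x =>
    induction v using WithBot.recBotCoe with
    | bot => rw [WithBot.add_bot]; exact WithBot.bot_lt_coe _
    | coe y =>
      rw [← WithBot.coe_add, WithBot.coe_lt_coe]
      rw [WithBot.coe_lt_coe] at h1
      rw [WithBot.coe_le_coe] at h2
      omega

section Basics

variable {K S : Type*} [Field K] [Ring S] [Algebra K S]
variable {χ : S → WithBot ℤ} (hχ : IsPseudoDegree χ)

include hχ

lemma chi_zero : χ 0 = ⊥ := (hχ.eq_bot_iff 0).mpr rfl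

lemma chi_ne_bot {x : S} (hx : x ≠ 0) : χ x ≠ ⊥ := fun h => hx ((hχ.eq_bot_iff x).mp h)

lemma chi_int {x : S} (hx : x ≠ 0) : ∃ n : ℤ, χ x = (n : WithBot ℤ) := by
  obtain ⟨n, hn⟩ := WithBot.ne_bot_iff_exists.mp (chi_ne_bot hχ hx)
  exact ⟨n, hn.symm⟩

lemma mul_ne_zero' {x y : S} (hx : x ≠ 0) (hy : y ≠ 0) : x * y ≠ 0 := by
  intro h
  have h2 := hχ.map_mul x y
  rw [h, chi_zero hχ] at h2
  rcases WithBot.add_eq_bot.mp h2.symm with h3 | h3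
  exacts [chi_ne_bot hχ hx h3, chi_ne_bot hχ hy h3]

lemma chi_one (hS : Nontrivial S) : χ (1 : S) = 0 := by
  obtain ⟨n, hn⟩ := chi_int hχ (one_ne_zero : (1:S) ≠ 0)
  have h := hχ.map_mul 1 1
  rw [one_mul, hn, ← WithBot.coe_add] at h
  have : n = n + n := WithBot.coe_inj.mp h
  have : n = 0 := by omega
  rw [hn, this]; rfl

lemma chi_neg (hS : Nontrivial S) (x : S) : χ (-x) = χ x := by
  have hm1 : χ (-1 : S) = 0 := by
    obtain ⟨n, hn⟩ := chi_int hχ (neg_ne_zero.mpr (one_ne_zero : (1:S) ≠ 0))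
    have h := hχ.map_mul (-1) (-1)
    rw [neg_mul_neg, one_mul, chi_one hχ hS, hn, ← WithBot.coe_add] at h
    have : (0:ℤ) = n + n := WithBot.coe_inj.mp h
    have : n = 0 := by omega
    rw [hn, this]; rfl
  calc χ (-x) = χ ((-1) * x) := by rw [neg_one_mul]
  _ = χ x := by rw [hχ.map_mul, hm1, zero_add]

lemma chi_add_lt {x y : S} {c : WithBot ℤ} (h1 : χ x < c) (h2 : χ y < c) : χ (x + y) < c :=
  lt_of_le_of_lt (hχ.add_le x y) (max_lt h1 h2)

lemma chi_sub_lt (hS : Nontrivial S) {x y : S} {c : WithBot ℤ} (h1 : χ x < c) (h2 : χ y < c) :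
    χ (x - y) < c := by
  rw [sub_eq_add_neg]
  exact chi_add_lt hχ h1 (by rwa [chi_neg hχ hS])

lemma chi_mul_le {x y : S} {p q : ℤ} (h1 : χ x ≤ (p : WithBot ℤ)) (h2 : χ y ≤ (q:WithBot ℤ)) :
    χ (x * y) ≤ ((p + q : ℤ) : WithBot ℤ) := by
  rw [hχ.map_mul]; exact wb_add_le h1 h2

lemma chi_mul_lt_r {x y : S} {p q : ℤ} (h1 : χ x ≤ (p : WithBot ℤ)) (h2 : χ y < (q:WithBot ℤ)) :
    χ (x * y) < ((p + q : ℤ) : WithBot ℤ) := by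
  rw [hχ.map_mul]; exact wb_add_lt_r h1 h2

lemma chi_mul_lt_l {x y : S} {p q : ℤ} (h1 : χ x < (p : WithBot ℤ)) (h2 : χ y ≤ (q:WithBot ℤ)) :
    χ (x * y) < ((p + q : ℤ) : WithBot ℤ) := by
  rw [hχ.map_mul]; exact wb_add_lt_l h1 h2

end Basics

section Central

variable {K S : Type*} [Field K] [Ring S] [Algebra K S]
variable {χ : S → WithBot ℤ} {a : S} {m : ℕ}
variable (hχ : IsPseudoDegree χ) (hm : 0 < m) (hχa : χ a = ((m : ℤ) : WithBot ℤ))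
variable (hD : CondD χ (Subalgebra.centralizer K {a}) 1)

include hχ hχa in
lemma a_ne_zero : a ≠ 0 := by
  intro h
  rw [h, chi_zero hχ] at hχa
  exact absurd hχa (by simp)

include hχ hχa in
lemma nontrivS : Nontrivial S := by
  refine ⟨a, 0, ?_⟩
  intro h
  rw [h, chi_zero hχ] at hχa
  exact absurd hχa.symm (by simp)

lemma a_mem : a ∈ Subalgebra.centralizer K {a} := by
  rw [Subalgebra.mem_centralizer_iff]
  rintro g hg
  rw [Set.mem_singleton_iff] at hg
  rw [hg]

lemma comm_of_mem {x : S} (hx : x ∈ Subalgebra.centralizer K {a}) : a * x = x * a := by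
  rw [Subalgebra.mem_centralizer_iff] at hx
  exact hx a rfl

lemma pow_comm_of_mem {x : S} (hx : x ∈ Subalgebra.centralizer K {a}) (k : ℕ) :
    a ^ k * x = x * a ^ k :=
  ((Commute.pow_left (comm_of_mem hx) k))

include hχ hχa hD in
lemma chi_algebraMap {c : K} (hc : c ≠ 0) : χ (algebraMap K S c) = 0 := by
  have hS := nontrivS hχ hχa
  have hinj : Function.Injective (algebraMap K S) := RingHom.injective _
  have h1 : (algebraMap K S c) ≠ 0 := by
    intro h; exact hc (hinj (by rw [h, map_zero]))
  have h2 : (algebraMap K S c⁻¹) ≠ 0 := by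
    intro h; exact (inv_ne_zero hc) (hinj (by rw [h, map_zero]))
  have hmem1 : (algebraMap K S c) ∈ Subalgebra.centralizer K {a} :=
    Subalgebra.algebraMap_mem _ c
  have hmem2 : (algebraMap K S c⁻¹) ∈ Subalgebra.centralizer K {a} :=
    Subalgebra.algebraMap_mem _ c⁻¹
  have hn1 := hD.1 _ hmem1 h1
  have hn2 := hD.1 _ hmem2 h2
  have hsum : χ (algebraMap K S c) + χ (algebraMap K S c⁻¹) = 0 := by
    rw [← hχ.map_mul, ← map_mul, mul_inv_cancel₀ hc, map_one, chi_one hχ hS]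
  obtain ⟨n1, hn1'⟩ := chi_int hχ h1
  obtain ⟨n2, hn2'⟩ := chi_int hχ h2
  rw [hn1', hn2', ← WithBot.coe_add] at hsum
  rw [hn1'] at hn1 ⊢
  rw [hn2'] at hn2
  have e1 : n1 + n2 = 0 := by exact_mod_cast hsum
  have e2 : (0:ℤ) ≤ n1 := by exact_mod_cast hn1
  have e3 : (0:ℤ) ≤ n2 := by exact_mod_cast hn2
  have h0 : n1 = 0 := by omega
  rw [h0]; rfl

include hχ hχa hD in
lemma chi_smul {c : K} (hc : c ≠ 0) (x : S) : χ (c • x) = χ x := by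
  rw [Algebra.smul_def, hχ.map_mul, chi_algebraMap hχ hχa hD hc, zero_add]

include hχ hχa hD in
lemma chi_smul_le (c : K) (x : S) : χ (c • x) ≤ χ x := by
  by_cases hc : c = 0
  · rw [hc, zero_smul, chi_zero hχ]; exact bot_le
  · rw [chi_smul hχ hχa hD hc]

include hχ hχa hD in
lemma lemma4 {x y : S} (hx : x ∈ Subalgebra.centralizer K {a})
    (hy : y ∈ Subalgebra.centralizer K {a}) (hx0 : x ≠ 0) (hxy : χ x = χ y) :
    ∃ lam : K, χ (x - lam • y) < χ x := by
  have hb : ∀ i : Fin 2, (![x, y]) i ∈ Subalgebra.centralizer K {a} := by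
    intro i; fin_cases i <;> simpa
  have hbe : ∀ i : Fin 2, χ ((![x, y]) i) = χ ((![x, y]) 0) := by
    intro i; fin_cases i <;> simp [hxy.symm]
  obtain ⟨α, hα, hlt⟩ := hD.2 ![x, y] hb hbe (by simpa using chi_ne_bot hχ hx0)
  rw [Fin.sum_univ_two] at hlt
  simp only [Matrix.cons_val_zero, Matrix.cons_val_one, Matrix.head_cons] at hlt
  have hα0 : α 0 ≠ 0 := by
    intro h0
    rw [h0, zero_smul, zero_add] at hlt
    by_cases h1 : α 1 = 0
    · apply hα; funext i; fin_cases i <;> simp [h0, h1]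
    · rw [chi_smul hχ hχa hD h1, ← hxy] at hlt
      exact lt_irrefl _ hlt
  refine ⟨-(α 1 / α 0), ?_⟩
  have key : x - (-(α 1 / α 0)) • y = (α 0)⁻¹ • (α 0 • x + α 1 • y) := by
    rw [smul_add, smul_smul, smul_smul, inv_mul_cancel₀ hα0, one_smul]
    rw [neg_smul, sub_neg_eq_add]
    congr 2
    field_simp
  rw [key, chi_smul hχ hχa hD (inv_ne_zero hα0)]
  exact hlt

end Central

section Coeff

variable {K S : Type*} [Field K] [Ring S] [Algebra K S]
variable {χ : S → WithBot ℤ} {a : S} {m : ℕ}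
variable (hχ : IsPseudoDegree χ) (hm : 0 < m) (hχa : χ a = ((m : ℤ) : WithBot ℤ))
variable (hD : CondD χ (Subalgebra.centralizer K {a}) 1)

end Coeff

open Classical in
/-- the coefficient of `w` against the reference element `r` (of the same or larger degree). -/
noncomputable def coeffOf (K : Type*) {S : Type*} [Field K] [Ring S] [Algebra K S]
    (χ : S → WithBot ℤ) (r w : S) : K :=
  if h : ∃ c : K, χ (w - c • r) < χ r then h.choose else 0

section Coeff2

variable {K S : Type*} [Field K] [Ring S] [Algebra K S]
variable {χ : S → WithBot ℤ} {a : S} {m : ℕ}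
variable (hχ : IsPseudoDegree χ) (hm : 0 < m) (hχa : χ a = ((m : ℤ) : WithBot ℤ))
variable (hD : CondD χ (Subalgebra.centralizer K {a}) 1)

include hχ hχa hD in
lemma coeffOf_eq {r w : S} (hrb : χ r ≠ ⊥) {c : K} (hc : χ (w - c • r) < χ r) :
    coeffOf K χ r w = c := by
  have hS := nontrivS hχ hχa
  have hex : ∃ c : K, χ (w - c • r) < χ r := ⟨c, hc⟩
  classical
  rw [coeffOf, dif_pos hex]
  set e := hex.choose with he
  have hspec : χ (w - e • r) < χ r := hex.choose_spec
  by_contra hne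
  have hkey : (c - e) • r = (w - e • r) - (w - c • r) := by
    rw [sub_smul]; abel
  have h1 : χ ((c - e) • r) = χ r := chi_smul hχ hχa hD (sub_ne_zero.mpr (fun hh => hne hh.symm)) r
  have h2 : χ ((c - e) • r) < χ r := by
    rw [hkey]; exact chi_sub_lt hχ hS hspec hc
  rw [h1] at h2
  exact lt_irrefl _ h2

include hχ in
lemma coeffOf_spec {r w : S} (hex : ∃ c : K, χ (w - c • r) < χ r) :
    χ (w - coeffOf K χ r w • r) < χ r := by
  classical
  rw [coeffOf, dif_pos hex]
  exact hex.choose_spec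

include hχ hχa hD in
lemma coeff_exists {r w : S} (hr : r ∈ Subalgebra.centralizer K {a})
    (hw : w ∈ Subalgebra.centralizer K {a}) (hr0 : r ≠ 0) (hle : χ w ≤ χ r) :
    ∃ c : K, χ (w - c • r) < χ r := by
  rcases lt_or_eq_of_le hle with h | h
  · exact ⟨0, by simpa using h⟩
  · have hw0 : w ≠ 0 := by
      intro hh
      rw [hh, chi_zero hχ] at h
      exact chi_ne_bot hχ hr0 h.symm
    obtain ⟨lam, hlam⟩ := lemma4 hχ hχa hD hw hr hw0 h
    exact ⟨lam, by rwa [h] at hlam⟩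

include hχ in
lemma coeffOf_ne_zero {r w : S} (hex : ∃ c : K, χ (w - c • r) < χ r) (heq : χ w = χ r) :
    coeffOf K χ r w ≠ 0 := by
  intro h0
  have := coeffOf_spec hχ hex
  rw [h0, zero_smul, sub_zero, heq] at this
  exact lt_irrefl _ this

end Coeff2


lemma wb_lt_coe_mono {u : WithBot ℤ} {p q : ℤ} (h : u < (p:WithBot ℤ)) (hpq : p ≤ q) :
    u < (q:WithBot ℤ) :=
  lt_of_lt_of_le h (by exact_mod_cast hpq)

lemma wb_le_coe_mono {u : WithBot ℤ} {p q : ℤ} (h : u ≤ (p:WithBot ℤ)) (hpq : p ≤ q) :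
    u ≤ (q:WithBot ℤ) :=
  le_trans h (by exact_mod_cast hpq)

/-- the leading coefficient of `x*y` against `y*x`. -/
noncomputable def pv (K : Type*) {S : Type*} [Field K] [Ring S] [Algebra K S]
    (χ : S → WithBot ℤ) (x y : S) : K :=
  coeffOf K χ (y * x) (x * y)

section PV

variable {K S : Type*} [Field K] [Ring S] [Algebra K S]
variable {χ : S → WithBot ℤ} {a : S} {m : ℕ}
variable (hχ : IsPseudoDegree χ) (hχa : χ a = ((m : ℤ) : WithBot ℤ))
variable (hD : CondD χ (Subalgebra.centralizer K {a}) 1)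

variable {x x' y y' : S}
  (hx : x ∈ Subalgebra.centralizer K {a}) (hx' : x' ∈ Subalgebra.centralizer K {a})
  (hy : y ∈ Subalgebra.centralizer K {a}) (hy' : y' ∈ Subalgebra.centralizer K {a})
  (hx0 : x ≠ 0) (hx'0 : x' ≠ 0) (hy0 : y ≠ 0) (hy'0 : y' ≠ 0)

include hχ hχa hD

include hx hy hx0 hy0 in
lemma pv_exists : ∃ c : K, χ (x * y - c • (y * x)) < χ (y * x) := by
  refine coeff_exists hχ hχa hD (mul_mem hy hx) (mul_mem hx hy)
    (mul_ne_zero' hχ hy0 hx0) (le_of_eq ?_)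
  rw [hχ.map_mul, hχ.map_mul, add_comm]

include hx hy hx0 hy0 in
lemma pv_spec : χ (x * y - pv K χ x y • (y * x)) < χ x + χ y := by
  have h := coeffOf_spec hχ (pv_exists hχ hχa hD hx hy hx0 hy0)
  rw [pv]
  rw [hχ.map_mul, add_comm] at h
  exact h

include hx hy hx0 hy0 in
lemma pv_ne_zero : pv K χ x y ≠ 0 :=
  coeffOf_ne_zero hχ (pv_exists hχ hχa hD hx hy hx0 hy0)
    (by rw [hχ.map_mul, hχ.map_mul, add_comm])

include hx hx0 in
lemma pv_self : pv K χ x x = 1 := by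
  refine coeffOf_eq hχ hχa hD (chi_ne_bot hχ (mul_ne_zero' hχ hx0 hx0)) ?_
  rw [one_smul, sub_self, chi_zero hχ]
  exact (chi_ne_bot hχ (mul_ne_zero' hχ hx0 hx0)).bot_lt

include hx hx0 in
lemma pv_one_left : pv K χ (1:S) x = 1 := by
  have hS := nontrivS hχ hχa
  have h1 : (1:S) ≠ 0 := one_ne_zero
  refine coeffOf_eq hχ hχa hD (chi_ne_bot hχ (mul_ne_zero' hχ hx0 h1)) ?_
  rw [one_smul, one_mul, mul_one, sub_self, chi_zero hχ]
  exact (chi_ne_bot hχ hx0).bot_lt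

include hx hx0 in
lemma pv_one_right : pv K χ x (1:S) = 1 := by
  have hS := nontrivS hχ hχa
  have h1 : (1:S) ≠ 0 := one_ne_zero
  refine coeffOf_eq hχ hχa hD (chi_ne_bot hχ (mul_ne_zero' hχ h1 hx0)) ?_
  rw [one_smul, one_mul, mul_one, sub_self, chi_zero hχ]
  exact (chi_ne_bot hχ hx0).bot_lt

include hx hy hx0 hy0 in
lemma pv_antisymm : pv K χ x y * pv K χ y x = 1 := by
  set p := pv K χ x y
  set q := pv K χ y x
  have hS := nontrivS hχ hχa
  have h1 := pv_spec hχ hχa hD hx hy hx0 hy0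
  have h2 := pv_spec hχ hχa hD hy hx hy0 hx0
  rw [add_comm (χ y) (χ x)] at h2
  have hkey : (1 - p * q) • (x * y) = (x * y - p • (y * x)) + p • (y * x - q • (x * y)) := by
    simp only [mul_sub, sub_mul, smul_sub, mul_smul_comm, smul_mul_assoc, smul_smul,
      sub_smul, one_smul, mul_assoc]
    abel
  by_contra hne
  have hne' : 1 - p * q ≠ 0 := sub_ne_zero.mpr (fun hh => hne hh.symm)
  have hl : χ ((1 - p * q) • (x * y)) = χ x + χ y := by
    rw [chi_smul hχ hχa hD hne', hχ.map_mul]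
  have hr : χ ((1 - p * q) • (x * y)) < χ x + χ y := by
    rw [hkey]
    exact chi_add_lt hχ h1 (lt_of_le_of_lt (chi_smul_le hχ hχa hD _ _) h2)
  rw [hl] at hr
  exact lt_irrefl _ hr

include hx hx' hy hx0 hx'0 hy0 in
lemma pv_mul_left : pv K χ (x * x') y = pv K χ x y * pv K χ x' y := by
  obtain ⟨nx, hnx⟩ := chi_int hχ hx0
  obtain ⟨nx', hnx'⟩ := chi_int hχ hx'0
  obtain ⟨ny, hny⟩ := chi_int hχ hy0
  set p₁ := pv K χ x y
  set p₂ := pv K χ x' y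
  have h1 : χ (x * y - p₁ • (y * x)) < ((nx + ny : ℤ) : WithBot ℤ) := by
    have := pv_spec hχ hχa hD hx hy hx0 hy0
    rwa [hnx, hny, ← WithBot.coe_add] at this
  have h2 : χ (x' * y - p₂ • (y * x')) < ((nx' + ny : ℤ) : WithBot ℤ) := by
    have := pv_spec hχ hχa hD hx' hy hx'0 hy0
    rwa [hnx', hny, ← WithBot.coe_add] at this
  refine coeffOf_eq hχ hχa hD
    (chi_ne_bot hχ (mul_ne_zero' hχ hy0 (mul_ne_zero' hχ hx0 hx'0))) ?_
  have hkey : (x*x')*y - (p₁*p₂) • (y*(x*x'))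
      = x*(x'*y - p₂•(y*x')) + p₂ • ((x*y - p₁•(y*x))*x') := by
    simp only [mul_sub, sub_mul, smul_sub, mul_smul_comm, smul_mul_assoc, smul_smul, mul_assoc]
    rw [mul_comm p₂ p₁]
    abel
  have href : χ (y*(x*x')) = ((ny + (nx + nx') : ℤ) : WithBot ℤ) := by
    rw [hχ.map_mul, hχ.map_mul, hnx, hnx', hny, ← WithBot.coe_add, ← WithBot.coe_add]
  rw [hkey, href]
  apply chi_add_lt hχ
  · exact wb_lt_coe_mono (chi_mul_lt_r hχ (le_of_eq hnx) h2) (by omega)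
  · refine lt_of_le_of_lt (chi_smul_le hχ hχa hD _ _) ?_
    exact wb_lt_coe_mono (chi_mul_lt_l hχ h1 (le_of_eq hnx')) (by omega)

include hx hy hy' hx0 hy0 hy'0 in
lemma pv_mul_right : pv K χ x (y * y') = pv K χ x y * pv K χ x y' := by
  obtain ⟨nx, hnx⟩ := chi_int hχ hx0
  obtain ⟨ny, hny⟩ := chi_int hχ hy0
  obtain ⟨ny', hny'⟩ := chi_int hχ hy'0
  set p₁ := pv K χ x y
  set p₂ := pv K χ x y'
  have h1 : χ (x * y - p₁ • (y * x)) < ((nx + ny : ℤ) : WithBot ℤ) := by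
    have := pv_spec hχ hχa hD hx hy hx0 hy0
    rwa [hnx, hny, ← WithBot.coe_add] at this
  have h2 : χ (x * y' - p₂ • (y' * x)) < ((nx + ny' : ℤ) : WithBot ℤ) := by
    have := pv_spec hχ hχa hD hx hy' hx0 hy'0
    rwa [hnx, hny', ← WithBot.coe_add] at this
  refine coeffOf_eq hχ hχa hD
    (chi_ne_bot hχ (mul_ne_zero' hχ (mul_ne_zero' hχ hy0 hy'0) hx0)) ?_
  have hkey : x*(y*y') - (p₁*p₂) • ((y*y')*x)
      = (x*y - p₁•(y*x))*y' + p₁ • (y*(x*y' - p₂•(y'*x))) := by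
    simp only [mul_sub, sub_mul, smul_sub, mul_smul_comm, smul_mul_assoc, smul_smul, mul_assoc]
    rw [mul_comm p₁ p₂]
    abel
  have href : χ ((y*y')*x) = ((ny + ny' + nx : ℤ) : WithBot ℤ) := by
    rw [hχ.map_mul, hχ.map_mul, hnx, hny, hny', ← WithBot.coe_add, ← WithBot.coe_add]
  rw [hkey, href]
  apply chi_add_lt hχ
  · exact wb_lt_coe_mono (chi_mul_lt_l hχ h1 (le_of_eq hny')) (by omega)
  · refine lt_of_le_of_lt (chi_smul_le hχ hχa hD _ _) ?_
    exact wb_lt_coe_mono (chi_mul_lt_r hχ (le_of_eq hny) h2) (by omega)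

include hx hx' hy hx0 hx'0 hy0 in
lemma pv_congr_left (hdeg : χ x' = χ x) : pv K χ x' y = pv K χ x y := by
  have hS := nontrivS hχ hχa
  obtain ⟨nx, hnx⟩ := chi_int hχ hx0
  obtain ⟨ny, hny⟩ := chi_int hχ hy0
  obtain ⟨lam, hlam⟩ := lemma4 hχ hχa hD hx' hx hx'0 (by rw [hdeg])
  set p := pv K χ x y
  set v := x' - lam • x with hv
  have hvx : x' = lam • x + v := by rw [hv]; abel
  have hvdeg : χ v < (nx : WithBot ℤ) := by rw [← hnx, ← hdeg]; exact hlam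
  have h1 : χ (x * y - p • (y * x)) < ((nx + ny : ℤ) : WithBot ℤ) := by
    have := pv_spec hχ hχa hD hx hy hx0 hy0
    rwa [hnx, hny, ← WithBot.coe_add] at this
  refine coeffOf_eq hχ hχa hD (chi_ne_bot hχ (mul_ne_zero' hχ hy0 hx'0)) ?_
  have hkey : x'*y - p • (y*x') = lam•(x*y - p•(y*x)) + (v*y - p•(y*v)) := by
    rw [hvx]
    simp only [mul_add, add_mul, mul_sub, sub_mul, smul_sub, smul_add, mul_smul_comm,
      smul_mul_assoc, smul_smul, mul_assoc, mul_comm lam p]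
    abel
  have href : χ (y*x') = ((ny + nx : ℤ) : WithBot ℤ) := by
    rw [hχ.map_mul, hny, hdeg, hnx, ← WithBot.coe_add]
  rw [hkey, href]
  apply chi_add_lt hχ
  · refine lt_of_le_of_lt (chi_smul_le hχ hχa hD _ _) ?_
    exact wb_lt_coe_mono h1 (by omega)
  · apply chi_sub_lt hχ hS
    · exact wb_lt_coe_mono (chi_mul_lt_l hχ hvdeg (le_of_eq hny)) (by omega)
    · refine lt_of_le_of_lt (chi_smul_le hχ hχa hD _ _) ?_
      exact wb_lt_coe_mono (chi_mul_lt_r hχ (le_of_eq hny) hvdeg) (by omega)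

include hx hx' hy hx0 hx'0 hy0 in
lemma pv_congr_right (hdeg : χ x' = χ x) : pv K χ y x' = pv K χ y x := by
  have ha1 := pv_antisymm hχ hχa hD hx' hy hx'0 hy0
  have ha2 := pv_antisymm hχ hχa hD hx hy hx0 hy0
  have hc := pv_congr_left hχ hχa hD hx hx' hy hx0 hx'0 hy0 hdeg
  rw [hc] at ha1
  exact mul_left_cancel₀ (pv_ne_zero hχ hχa hD hx hy hx0 hy0) (ha1.trans ha2.symm)

end PV


section Level1

variable {K S : Type*} [Field K] [Ring S] [Algebra K S]
variable {χ : S → WithBot ℤ} {a : S} {m : ℕ}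
variable (hχ : IsPseudoDegree χ) (hχa : χ a = ((m : ℤ) : WithBot ℤ))
variable (hD : CondD χ (Subalgebra.centralizer K {a}) 1)

include hχ hχa hD in
theorem comm_lt (hm : 0 < m) {x y : S}
    (hx : x ∈ Subalgebra.centralizer K {a}) (hy : y ∈ Subalgebra.centralizer K {a})
    (hx0 : x ≠ 0) (hy0 : y ≠ 0) :
    χ (x * y - y * x) < χ x + χ y := by
  classical
  have hS := nontrivS hχ hχa
  set E : Set ℤ :=
    {n : ℤ | ∃ u : S, u ∈ Subalgebra.centralizer K {a} ∧ u ≠ 0 ∧ χ u = (n : WithBot ℤ)} with hE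
  have hch : ∀ n : ℤ, ∃ u : S, n ∈ E →
      (u ∈ Subalgebra.centralizer K {a} ∧ u ≠ 0 ∧ χ u = (n : WithBot ℤ)) := by
    intro n
    by_cases h : n ∈ E
    · obtain ⟨u, hu⟩ := h
      exact ⟨u, fun _ => hu⟩
    · exact ⟨1, fun hh => absurd hh h⟩
  choose uu huu using hch
  have h0E : (0:ℤ) ∈ E := ⟨1, one_mem _, one_ne_zero, chi_one hχ hS⟩
  have haddE : ∀ {s t : ℤ}, s ∈ E → t ∈ E → s + t ∈ E := by
    rintro s t ⟨u, hu, hu0, hus⟩ ⟨v, hv, hv0, hvt⟩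
    exact ⟨u * v, mul_mem hu hv, mul_ne_zero' hχ hu0 hv0,
      by rw [hχ.map_mul, hus, hvt, ← WithBot.coe_add]⟩
  have hmE : ((m:ℤ)) ∈ E := ⟨a, a_mem, a_ne_zero hχ hχa, hχa⟩
  set f : ℤ → ℤ → Kˣ :=
    fun n n' => if h : pv K χ (uu n) (uu n') = 0 then 1 else Units.mk0 _ h with hf
  have hfval : ∀ {n n' : ℤ}, n ∈ E → n' ∈ E → (f n n' : K) = pv K χ (uu n) (uu n') := by
    intro n n' hn hn'
    obtain ⟨hm1, h01, he1⟩ := huu n hn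
    obtain ⟨hm2, h02, he2⟩ := huu n' hn'
    have hpne : pv K χ (uu n) (uu n') ≠ 0 := pv_ne_zero hχ hχa hD hm1 hm2 h01 h02
    simp only [hf]
    rw [dif_neg hpne, Units.val_mk0]
  have hfl : ∀ {s t u : ℤ}, s ∈ E → t ∈ E → u ∈ E → f (s+t) u = f s u * f t u := by
    intro s t u hs ht hu
    obtain ⟨hms, h0s, hes⟩ := huu s hs
    obtain ⟨hmt, h0t, het⟩ := huu t ht
    obtain ⟨hmu, h0u, heu⟩ := huu u hu
    obtain ⟨hmst, h0st, hest⟩ := huu (s+t) (haddE hs ht)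
    apply Units.ext
    rw [Units.val_mul, hfval (haddE hs ht) hu, hfval hs hu, hfval ht hu]
    have hdeg : χ (uu (s+t)) = χ (uu s * uu t) := by
      rw [hχ.map_mul, hes, het, hest, ← WithBot.coe_add]
    rw [pv_congr_left hχ hχa hD (mul_mem hms hmt) hmst hmu
      (mul_ne_zero' hχ h0s h0t) h0st h0u hdeg]
    exact pv_mul_left hχ hχa hD hms hmt hmu h0s h0t h0u
  have hfr : ∀ {s t u : ℤ}, s ∈ E → t ∈ E → u ∈ E → f s (t+u) = f s t * f s u := by
    intro s t u hs ht hu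
    obtain ⟨hms, h0s, hes⟩ := huu s hs
    obtain ⟨hmt, h0t, het⟩ := huu t ht
    obtain ⟨hmu, h0u, heu⟩ := huu u hu
    obtain ⟨hmtu, h0tu, hetu⟩ := huu (t+u) (haddE ht hu)
    apply Units.ext
    rw [Units.val_mul, hfval hs (haddE ht hu), hfval hs ht, hfval hs hu]
    have hdeg : χ (uu (t+u)) = χ (uu t * uu u) := by
      rw [hχ.map_mul, het, heu, hetu, ← WithBot.coe_add]
    rw [pv_congr_right hχ hχa hD (mul_mem hmt hmu) hmtu hms
      (mul_ne_zero' hχ h0t h0u) h0tu h0s hdeg]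
    exact pv_mul_right hχ hχa hD hms hmt hmu h0s h0t h0u
  have hdiag : ∀ {s : ℤ}, s ∈ E → f s s = 1 := by
    intro s hs
    obtain ⟨hms, h0s, hes⟩ := huu s hs
    apply Units.ext
    rw [hfval hs hs, pv_self hχ hχa hD hms h0s, Units.val_one]
  have htriv : ∀ {s t : ℤ}, s ∈ E → t ∈ E → f s t = 1 :=
    pairing_trivial E h0E (fun {s t} => haddE) (m:ℤ) hmE
      (by exact_mod_cast hm) f hfl hfr hdiag
  -- conclude
  obtain ⟨nx, hnx⟩ := chi_int hχ hx0
  obtain ⟨ny, hny⟩ := chi_int hχ hy0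
  have hnxE : nx ∈ E := ⟨x, hx, hx0, hnx⟩
  have hnyE : ny ∈ E := ⟨y, hy, hy0, hny⟩
  obtain ⟨hmx, h0x, hex⟩ := huu nx hnxE
  obtain ⟨hmy, h0y, hey⟩ := huu ny hnyE
  have hp1 : pv K χ x y = 1 := by
    have e1 : pv K χ (uu nx) y = pv K χ x y :=
      pv_congr_left hχ hχa hD hx hmx hy hx0 h0x hy0 (by rw [hex, hnx])
    have e2 : pv K χ (uu nx) (uu ny) = pv K χ (uu nx) y :=
      pv_congr_right hχ hχa hD hy hmy hmx hy0 h0y h0x (by rw [hey, hny])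
    have e3 : (f nx ny : K) = 1 := by rw [htriv hnxE hnyE, Units.val_one]
    rw [← e1, ← e2, ← hfval hnxE hnyE, e3]
  have := pv_spec hχ hχa hD hx hy hx0 hy0
  rwa [hp1, one_smul] at this

end Level1


/-- the normalized leading coefficient of the commutator `[x,y]`, at depth `σ`,
measured against the reference `us * (y * x)` after multiplying by `a^k`. -/
noncomputable def gg (K : Type*) {S : Type*} [Field K] [Ring S] [Algebra K S]
    (χ : S → WithBot ℤ) (a : S) (k : ℕ) (us : S) (x y : S) : K :=
  coeffOf K χ (us * (y * x)) (a ^ k * (x * y - y * x))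

section Level2

variable {K S : Type*} [Field K] [Ring S] [Algebra K S]
variable {χ : S → WithBot ℤ} {a : S} {m : ℕ}
variable (hχ : IsPseudoDegree χ) (hχa : χ a = ((m : ℤ) : WithBot ℤ))
variable (hD : CondD χ (Subalgebra.centralizer K {a}) 1)
variable {σ : ℤ} {k : ℕ} {us : S} {s : ℤ}
variable (hσ1 : 1 ≤ σ)
variable (husC : us ∈ Subalgebra.centralizer K {a}) (hus0 : us ≠ 0)
variable (hus : χ us = (s : WithBot ℤ))
variable (hks : (k : ℤ) * m = s + σ)
variable (hmin : ∀ v w : S, v ∈ Subalgebra.centralizer K {a} →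
  w ∈ Subalgebra.centralizer K {a} → ∀ nv nw : ℤ, χ v ≤ (nv : WithBot ℤ) →
  χ w ≤ (nw : WithBot ℤ) → χ (v * w - w * v) ≤ ((nv + nw - σ : ℤ) : WithBot ℤ))

lemma wb_le_lt_mono {u : WithBot ℤ} {p q : ℤ} (h : u ≤ (p : WithBot ℤ)) (hpq : p < q) :
    u < (q : WithBot ℤ) :=
  lt_of_le_of_lt h (by exact_mod_cast hpq)

include hχ hχa in
lemma chi_apow : χ (a ^ k) = (((k : ℤ) * m : ℤ) : WithBot ℤ) := by
  have hS := nontrivS hχ hχa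
  induction k with
  | zero => simpa using chi_one hχ hS
  | succ j ih =>
    rw [pow_succ, hχ.map_mul, ih, hχa, ← WithBot.coe_add]
    congr 1
    push_cast
    ring

include hχ hχa in
lemma apow_ne : a ^ k ≠ 0 := by
  intro h
  have h2 := chi_apow (k := k) hχ hχa
  rw [h, chi_zero hχ] at h2
  exact WithBot.bot_ne_coe h2

variable {x x' y y' : S}
  (hx : x ∈ Subalgebra.centralizer K {a}) (hx' : x' ∈ Subalgebra.centralizer K {a})
  (hy : y ∈ Subalgebra.centralizer K {a}) (hy' : y' ∈ Subalgebra.centralizer K {a})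
  (hx0 : x ≠ 0) (hx'0 : x' ≠ 0) (hy0 : y ≠ 0) (hy'0 : y' ≠ 0)
  {nx nx' ny ny' : ℤ}
  (hnx : χ x = (nx : WithBot ℤ)) (hnx' : χ x' = (nx' : WithBot ℤ))
  (hny : χ y = (ny : WithBot ℤ)) (hny' : χ y' = (ny' : WithBot ℤ))

include hχ hχa hD husC hus0 hus hks hσ1 hmin

include hx hy hx0 hy0 hnx hny in
lemma gg_exists :
    ∃ c : K, χ (a ^ k * (x * y - y * x) - c • (us * (y * x))) < χ (us * (y * x)) := by
  refine coeff_exists hχ hχa hD (mul_mem husC (mul_mem hy hx))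
    (mul_mem (pow_mem (a_mem) k) (sub_mem (mul_mem hx hy) (mul_mem hy hx))) 
    (mul_ne_zero' hχ hus0 (mul_ne_zero' hχ hy0 hx0)) ?_
  have h1 : χ (us * (y * x)) = ((s + (ny + nx) : ℤ) : WithBot ℤ) := by
    rw [hχ.map_mul, hχ.map_mul, hus, hny, hnx, ← WithBot.coe_add, ← WithBot.coe_add]
  rw [h1]
  have h2 : χ (x * y - y * x) ≤ ((nx + ny - σ : ℤ) : WithBot ℤ) :=
    hmin x y hx hy nx ny (le_of_eq hnx) (le_of_eq hny)
  have h3 := chi_mul_le hχ (le_of_eq (chi_apow (k := k) hχ hχa)) h2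
  exact wb_le_coe_mono h3 (by omega)

include hx hy hx0 hy0 hnx hny in
lemma gg_spec :
    χ (a ^ k * (x * y - y * x) - gg K χ a k us x y • (us * (y * x)))
      < ((s + (ny + nx) : ℤ) : WithBot ℤ) := by
  have h := coeffOf_spec hχ
    (gg_exists hχ hχa hD hσ1 husC hus0 hus hks hmin hx hy hx0 hy0 hnx hny)
  have h1 : χ (us * (y * x)) = ((s + (ny + nx) : ℤ) : WithBot ℤ) := by
    rw [hχ.map_mul, hχ.map_mul, hus, hny, hnx, ← WithBot.coe_add, ← WithBot.coe_add]
  rw [gg, ← h1]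
  exact h

include hx hx0 in
lemma gg_self : gg K χ a k us x x = 0 := by
  refine coeffOf_eq hχ hχa hD
    (chi_ne_bot hχ (mul_ne_zero' hχ hus0 (mul_ne_zero' hχ hx0 hx0))) ?_
  rw [zero_smul, sub_zero, sub_self, mul_zero, chi_zero hχ]
  exact (chi_ne_bot hχ (mul_ne_zero' hχ hus0 (mul_ne_zero' hχ hx0 hx0))).bot_lt

include hx hx0 in
lemma gg_one_left : gg K χ a k us (1:S) x = 0 := by
  have hS := nontrivS hχ hχa
  have h1 : (1:S) ≠ 0 := one_ne_zero
  refine coeffOf_eq hχ hχa hD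
    (chi_ne_bot hχ (mul_ne_zero' hχ hus0 (mul_ne_zero' hχ hx0 h1))) ?_
  rw [zero_smul, sub_zero, one_mul, mul_one, sub_self, mul_zero, chi_zero hχ]
  exact (chi_ne_bot hχ (mul_ne_zero' hχ hus0 hx0)).bot_lt

include hx hx0 in
lemma gg_one_right : gg K χ a k us x (1:S) = 0 := by
  have hS := nontrivS hχ hχa
  have h1 : (1:S) ≠ 0 := one_ne_zero
  refine coeffOf_eq hχ hχa hD
    (chi_ne_bot hχ (mul_ne_zero' hχ hus0 (mul_ne_zero' hχ h1 hx0))) ?_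
  rw [zero_smul, sub_zero, one_mul, mul_one, sub_self, mul_zero, chi_zero hχ]
  exact (chi_ne_bot hχ (mul_ne_zero' hχ hus0 hx0)).bot_lt

include hx hy hx0 hy0 hnx hny in
lemma gg_antisymm : gg K χ a k us y x = - gg K χ a k us x y := by
  have hS := nontrivS hχ hχa
  set g := gg K χ a k us x y with hg
  have hsp := gg_spec hχ hχa hD hσ1 husC hus0 hus hks hmin hx hy hx0 hy0 hnx hny
  refine coeffOf_eq hχ hχa hD
    (chi_ne_bot hχ (mul_ne_zero' hχ hus0 (mul_ne_zero' hχ hx0 hy0))) ?_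
  have href : χ (us * (x * y)) = ((s + (nx + ny) : ℤ) : WithBot ℤ) := by
    rw [hχ.map_mul, hχ.map_mul, hus, hnx, hny, ← WithBot.coe_add, ← WithBot.coe_add]
  have hkey : a ^ k * (y * x - x * y) - (-g) • (us * (x * y))
      = -(a ^ k * (x * y - y * x) - g • (us * (y * x))) + g • (us * (x * y - y * x)) := by
    simp only [mul_sub, sub_mul, smul_sub, neg_smul, mul_smul_comm, smul_mul_assoc, smul_smul,
      mul_assoc]
    abel
  rw [href, hkey]
  apply chi_add_lt hχ
  · rw [chi_neg hχ hS]
    exact wb_lt_coe_mono hsp (by omega)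
  · refine lt_of_le_of_lt (chi_smul_le hχ hχa hD _ _) ?_
    have h2 : χ (x * y - y * x) ≤ ((nx + ny - σ : ℤ) : WithBot ℤ) :=
      hmin x y hx hy nx ny (le_of_eq hnx) (le_of_eq hny)
    exact wb_le_lt_mono (chi_mul_le hχ (le_of_eq hus) h2) (by omega)

include hx hx' hy hx0 hx'0 hy0 hnx hnx' hny in
lemma gg_mul_left :
    gg K χ a k us (x * x') y = gg K χ a k us x y + gg K χ a k us x' y := by
  have hS := nontrivS hχ hχa
  set g₁ := gg K χ a k us x y with hg₁
  set g₂ := gg K χ a k us x' y with hg₂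
  have hsp₁ := gg_spec hχ hχa hD hσ1 husC hus0 hus hks hmin hx hy hx0 hy0 hnx hny
  have hsp₂ := gg_spec hχ hχa hD hσ1 husC hus0 hus hks hmin hx' hy hx'0 hy0 hnx' hny
  have hxx'0 : x * x' ≠ 0 := mul_ne_zero' hχ hx0 hx'0
  refine coeffOf_eq hχ hχa hD
    (chi_ne_bot hχ (mul_ne_zero' hχ hus0 (mul_ne_zero' hχ hy0 hxx'0))) ?_
  have href : χ (us * (y * (x * x'))) = ((s + (ny + (nx + nx')) : ℤ) : WithBot ℤ) := by
    rw [hχ.map_mul, hχ.map_mul, hχ.map_mul, hus, hny, hnx, hnx',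
      ← WithBot.coe_add, ← WithBot.coe_add, ← WithBot.coe_add]
  -- step 1 : commute a^k through x
  have hax : a ^ k * x = x * a ^ k := pow_comm_of_mem hx k
  have hbase : (x*x')*y - y*(x*x') = x*(x'*y - y*x') + (x*y - y*x)*x' := by noncomm_ring
  have hW : a ^ k * ((x*x')*y - y*(x*x'))
      = x * (a ^ k * (x'*y - y*x')) + (a ^ k * (x*y - y*x)) * x' := by
    rw [hbase, mul_add, ← mul_assoc, hax]
    simp [mul_assoc]
  have hkey : a ^ k * ((x*x')*y - y*(x*x')) - (g₁ + g₂) • (us * (y * (x * x')))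
      = x*((a ^ k * (x'*y - y*x')) - g₂•(us*(y*x')))
        + ((a ^ k * (x*y - y*x)) - g₁•(us*(y*x)))*x'
        + g₂•((x*(us*y) - (us*y)*x)*x') := by
    rw [hW]
    simp only [mul_sub, sub_mul, smul_sub, add_smul, mul_smul_comm, smul_mul_assoc, smul_smul,
      mul_assoc]
    abel
  rw [href, hkey]
  apply chi_add_lt hχ
  apply chi_add_lt hχ
  · exact wb_lt_coe_mono (chi_mul_lt_r hχ (le_of_eq hnx) hsp₂) (by omega)
  · exact wb_lt_coe_mono (chi_mul_lt_l hχ hsp₁ (le_of_eq hnx')) (by omega)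
  · refine lt_of_le_of_lt (chi_smul_le hχ hχa hD _ _) ?_
    have husy : χ (us * y) ≤ ((s + ny : ℤ) : WithBot ℤ) :=
      le_of_eq (by rw [hχ.map_mul, hus, hny, ← WithBot.coe_add])
    have hcom : χ (x*(us*y) - (us*y)*x) ≤ ((nx + (s + ny) - σ : ℤ) : WithBot ℤ) :=
      hmin x (us*y) hx (mul_mem husC hy) nx (s+ny) (le_of_eq hnx) husy
    exact wb_le_lt_mono (chi_mul_le hχ hcom (le_of_eq hnx')) (by omega)

include hx hy hy' hx0 hy0 hy'0 hnx hny hny' in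
lemma gg_mul_right :
    gg K χ a k us x (y * y') = gg K χ a k us x y + gg K χ a k us x y' := by
  have hS := nontrivS hχ hχa
  set g₁ := gg K χ a k us x y with hg₁
  set g₂ := gg K χ a k us x y' with hg₂
  have hsp₁ := gg_spec hχ hχa hD hσ1 husC hus0 hus hks hmin hx hy hx0 hy0 hnx hny
  have hsp₂ := gg_spec hχ hχa hD hσ1 husC hus0 hus hks hmin hx hy' hx0 hy'0 hnx hny'
  have hyy'0 : y * y' ≠ 0 := mul_ne_zero' hχ hy0 hy'0
  refine coeffOf_eq hχ hχa hD
    (chi_ne_bot hχ (mul_ne_zero' hχ hus0 (mul_ne_zero' hχ hyy'0 hx0))) ?_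
  have href : χ (us * ((y * y') * x)) = ((s + ((ny + ny') + nx) : ℤ) : WithBot ℤ) := by
    rw [hχ.map_mul, hχ.map_mul, hχ.map_mul, hus, hny, hny', hnx,
      ← WithBot.coe_add, ← WithBot.coe_add, ← WithBot.coe_add]
  have hay : a ^ k * y = y * a ^ k := pow_comm_of_mem hy k
  have hbase : x*(y*y') - (y*y')*x = y*(x*y' - y'*x) + (x*y - y*x)*y' := by noncomm_ring
  have hW : a ^ k * (x*(y*y') - (y*y')*x)
      = y * (a ^ k * (x*y' - y'*x)) + (a ^ k * (x*y - y*x)) * y' := by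
    rw [hbase, mul_add, ← mul_assoc, hay]
    simp [mul_assoc]
  have hkey : a ^ k * (x*(y*y') - (y*y')*x) - (g₁ + g₂) • (us * ((y * y') * x))
      = y*((a ^ k * (x*y' - y'*x)) - g₂•(us*(y'*x)))
        + ((a ^ k * (x*y - y*x)) - g₁•(us*(y*x)))*y'
        + g₂•((y*us - us*y)*(y'*x)) + g₁•((us*y)*(x*y' - y'*x)) := by
    rw [hW]
    simp only [mul_sub, sub_mul, smul_sub, add_smul, mul_smul_comm, smul_mul_assoc, smul_smul,
      mul_assoc]
    abel
  rw [href, hkey]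
  apply chi_add_lt hχ
  apply chi_add_lt hχ
  apply chi_add_lt hχ
  · exact wb_lt_coe_mono (chi_mul_lt_r hχ (le_of_eq hny) hsp₂) (by omega)
  · exact wb_lt_coe_mono (chi_mul_lt_l hχ hsp₁ (le_of_eq hny')) (by omega)
  · refine lt_of_le_of_lt (chi_smul_le hχ hχa hD _ _) ?_
    have hyus : χ (y*us - us*y) ≤ ((ny + s - σ : ℤ) : WithBot ℤ) :=
      hmin y us hy husC ny s (le_of_eq hny) (le_of_eq hus)
    have hy'x : χ (y' * x) ≤ ((ny' + nx : ℤ) : WithBot ℤ) :=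
      le_of_eq (by rw [hχ.map_mul, hny', hnx, ← WithBot.coe_add])
    exact wb_le_lt_mono (chi_mul_le hχ hyus hy'x) (by omega)
  · refine lt_of_le_of_lt (chi_smul_le hχ hχa hD _ _) ?_
    have husy : χ (us * y) ≤ ((s + ny : ℤ) : WithBot ℤ) :=
      le_of_eq (by rw [hχ.map_mul, hus, hny, ← WithBot.coe_add])
    have hcom : χ (x*y' - y'*x) ≤ ((nx + ny' - σ : ℤ) : WithBot ℤ) :=
      hmin x y' hx hy' nx ny' (le_of_eq hnx) (le_of_eq hny')
    exact wb_le_lt_mono (chi_mul_le hχ husy hcom) (by omega)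

include hx hx' hy hx0 hx'0 hy0 hnx hnx' hny in
lemma gg_congr_left (hdeg : nx' = nx) : gg K χ a k us x' y = gg K χ a k us x y := by
  have hS := nontrivS hχ hχa
  set g₁ := gg K χ a k us x y with hg₁
  have hsp₁ := gg_spec hχ hχa hD hσ1 husC hus0 hus hks hmin hx hy hx0 hy0 hnx hny
  obtain ⟨lam, hlam⟩ := lemma4 hχ hχa hD hx' hx hx'0 (by rw [hnx, hnx', hdeg])
  set v := x' - lam • x with hv
  have hvx : x' = lam • x + v := by rw [hv]; abel
  have hvdeg : χ v < (nx : WithBot ℤ) := by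
    rwa [hnx', hdeg] at hlam
  have hvmem : v ∈ Subalgebra.centralizer K {a} := sub_mem hx' (SMulMemClass.smul_mem lam hx)
  refine coeffOf_eq hχ hχa hD
    (chi_ne_bot hχ (mul_ne_zero' hχ hus0 (mul_ne_zero' hχ hy0 hx'0))) ?_
  have href : χ (us * (y * x')) = ((s + (ny + nx) : ℤ) : WithBot ℤ) := by
    rw [hχ.map_mul, hχ.map_mul, hus, hny, hnx', hdeg,
      ← WithBot.coe_add, ← WithBot.coe_add]
  have hkey : a ^ k * (x'*y - y*x') - g₁•(us*(y*x'))
      = lam•(a ^ k *(x*y-y*x) - g₁•(us*(y*x))) + (a ^ k *(v*y - y*v) - g₁•(us*(y*v))) := by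
    rw [hvx]
    simp only [mul_sub, sub_mul, mul_add, add_mul, smul_sub, smul_add, mul_smul_comm,
      smul_mul_assoc, smul_smul, mul_assoc, mul_comm lam g₁]
    abel
  rw [href, hkey]
  apply chi_add_lt hχ
  · exact lt_of_le_of_lt (chi_smul_le hχ hχa hD _ _) hsp₁
  · apply chi_sub_lt hχ hS
    · have hcv : χ (v*y - y*v) ≤ ((nx - 1 + ny - σ : ℤ) : WithBot ℤ) := by
        refine hmin v y hvmem hy (nx - 1) ny ?_ (le_of_eq hny)
        by_cases hvb : χ v = ⊥
        · rw [hvb]; exact bot_le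
        · obtain ⟨nv, hnv⟩ := WithBot.ne_bot_iff_exists.mp hvb
          rw [← hnv]
          rw [← hnv, WithBot.coe_lt_coe] at hvdeg
          exact WithBot.coe_le_coe.mpr (by omega)
      have := chi_mul_le hχ (le_of_eq (chi_apow (k := k) hχ hχa)) hcv
      exact wb_le_lt_mono this (by omega)
    · refine lt_of_le_of_lt (chi_smul_le hχ hχa hD _ _) ?_
      have h1 : χ (y * v) < ((ny + nx : ℤ) : WithBot ℤ) := chi_mul_lt_r hχ (le_of_eq hny) hvdeg
      have := chi_mul_lt_r hχ (le_of_eq hus) h1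
      exact wb_lt_coe_mono this (by omega)

include hx hy hy' hx0 hy0 hy'0 hnx hny hny' in
lemma gg_congr_right (hdeg : ny' = ny) : gg K χ a k us x y' = gg K χ a k us x y := by
  have hS := nontrivS hχ hχa
  set g₁ := gg K χ a k us x y with hg₁
  have hsp₁ := gg_spec hχ hχa hD hσ1 husC hus0 hus hks hmin hx hy hx0 hy0 hnx hny
  obtain ⟨lam, hlam⟩ := lemma4 hχ hχa hD hy' hy hy'0 (by rw [hny, hny', hdeg])
  set v := y' - lam • y with hv
  have hvy : y' = lam • y + v := by rw [hv]; abel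
  have hvdeg : χ v < (ny : WithBot ℤ) := by
    rwa [hny', hdeg] at hlam
  have hvmem : v ∈ Subalgebra.centralizer K {a} := sub_mem hy' (SMulMemClass.smul_mem lam hy)
  refine coeffOf_eq hχ hχa hD
    (chi_ne_bot hχ (mul_ne_zero' hχ hus0 (mul_ne_zero' hχ hy'0 hx0))) ?_
  have href : χ (us * (y' * x)) = ((s + (ny + nx) : ℤ) : WithBot ℤ) := by
    rw [hχ.map_mul, hχ.map_mul, hus, hny', hdeg, hnx,
      ← WithBot.coe_add, ← WithBot.coe_add]
  have hkey : a ^ k * (x*y' - y'*x) - g₁•(us*(y'*x))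
      = lam•(a ^ k *(x*y-y*x) - g₁•(us*(y*x))) + (a ^ k *(x*v - v*x) - g₁•(us*(v*x))) := by
    rw [hvy]
    simp only [mul_sub, sub_mul, mul_add, add_mul, smul_sub, smul_add, mul_smul_comm,
      smul_mul_assoc, smul_smul, mul_assoc, mul_comm lam g₁]
    abel
  rw [href, hkey]
  apply chi_add_lt hχ
  · exact lt_of_le_of_lt (chi_smul_le hχ hχa hD _ _) hsp₁
  · apply chi_sub_lt hχ hS
    · have hcv : χ (x*v - v*x) ≤ ((nx + (ny - 1) - σ : ℤ) : WithBot ℤ) := by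
        refine hmin x v hx hvmem nx (ny - 1) (le_of_eq hnx) ?_
        by_cases hvb : χ v = ⊥
        · rw [hvb]; exact bot_le
        · obtain ⟨nv, hnv⟩ := WithBot.ne_bot_iff_exists.mp hvb
          rw [← hnv]
          rw [← hnv, WithBot.coe_lt_coe] at hvdeg
          exact WithBot.coe_le_coe.mpr (by omega)
      have := chi_mul_le hχ (le_of_eq (chi_apow (k := k) hχ hχa)) hcv
      exact wb_le_lt_mono this (by omega)
    · refine lt_of_le_of_lt (chi_smul_le hχ hχa hD _ _) ?_
      have h1 : χ (v * x) < ((ny + nx : ℤ) : WithBot ℤ) := chi_mul_lt_l hχ hvdeg (le_of_eq hnx)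
      have := chi_mul_lt_r hχ (le_of_eq hus) h1
      exact wb_lt_coe_mono this (by omega)

include hx hy hx0 hy0 hnx hny in
lemma gg_ne_zero (hcomm : χ (x * y - y * x) = ((nx + ny - σ : ℤ) : WithBot ℤ)) :
    gg K χ a k us x y ≠ 0 :=
  coeffOf_ne_zero hχ
    (gg_exists hχ hχa hD hσ1 husC hus0 hus hks hmin hx hy hx0 hy0 hnx hny)
    (by
      rw [hχ.map_mul, hχ.map_mul, hχ.map_mul, chi_apow (k := k) hχ hχa, hcomm, hus, hny, hnx,
        ← WithBot.coe_add, ← WithBot.coe_add, ← WithBot.coe_add]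
      congr 1
      omega)

end Level2


section Scalar

variable {K S : Type*} [Field K] [Ring S] [Algebra K S]
variable {χ : S → WithBot ℤ} {a : S} {m : ℕ}
variable (hχ : IsPseudoDegree χ) (hχa : χ a = ((m : ℤ) : WithBot ℤ))
variable (hD : CondD χ (Subalgebra.centralizer K {a}) 1)

include hχ hχa hD in
lemma deg_zero_commutes {x : S} (hx : x ∈ Subalgebra.centralizer K {a})
    (h0 : χ x = ((0:ℤ) : WithBot ℤ)) : ∀ y : S, x * y = y * x := by
  have hS := nontrivS hχ hχa
  have hx0 : x ≠ 0 := by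
    intro h
    rw [h, chi_zero hχ] at h0
    exact WithBot.bot_ne_coe h0
  obtain ⟨lam, hlam⟩ := lemma4 hχ hχa hD hx (one_mem _) hx0
    (by rw [h0, chi_one hχ hS]; rfl)
  have hz : x - lam • 1 = 0 := by
    by_contra hz
    have h1 := hD.1 _ (sub_mem hx (SMulMemClass.smul_mem lam (one_mem _))) hz
    rw [h0] at hlam
    have h2 : (0 : WithBot ℤ) < ((0:ℤ) : WithBot ℤ) := lt_of_le_of_lt h1 hlam
    simp at h2
  have hxx : x = lam • 1 := by rwa [sub_eq_zero] at hz
  intro y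
  rw [hxx, smul_mul_assoc, one_mul, mul_smul_comm, mul_one]

include hχ in
lemma chi_pow (hS : Nontrivial S) {z : S} {n : ℤ} (hz : χ z = (n : WithBot ℤ)) (j : ℕ) :
    χ (z ^ j) = (((j : ℤ) * n : ℤ) : WithBot ℤ) := by
  induction j with
  | zero => simpa using chi_one hχ hS
  | succ i ih =>
    rw [pow_succ, hχ.map_mul, ih, hz, ← WithBot.coe_add]
    congr 1
    push_cast
    ring

end Scalar

end Stmt9Aux

open Stmt9Aux

theorem stmt9 {K S : Type*} [Field K] [Ring S] [Algebra K S]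
    (χ : S → WithBot ℤ) (hχ : IsPseudoDegree χ)
    (a : S) (m : ℕ) (hm : 0 < m) (hχa : χ a = ((m : ℤ) : WithBot ℤ))
    (hD : CondD χ (Subalgebra.centralizer K {a}) 1) :
    ∀ b ∈ Subalgebra.centralizer K {a}, ∀ c ∈ Subalgebra.centralizer K {a},
      b * c = c * b := by
  classical
  intro b hb c hc
  by_contra hbc
  have hS := nontrivS hχ hχa
  have hcomm0 : b * c - c * b ≠ 0 := sub_ne_zero.mpr hbc
  have hb0 : b ≠ 0 := by rintro rfl; exact hbc (by rw [zero_mul, mul_zero])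
  have hc0 : c ≠ 0 := by rintro rfl; exact hbc (by rw [zero_mul, mul_zero])
  -- the least commutator defect σ
  set P : ℤ → Prop := fun t => ∃ x y : S, x ∈ Subalgebra.centralizer K {a} ∧
    y ∈ Subalgebra.centralizer K {a} ∧ ∃ nx ny nc : ℤ, χ x = (nx : WithBot ℤ) ∧
    χ y = (ny : WithBot ℤ) ∧ χ (x*y - y*x) = (nc : WithBot ℤ) ∧ t = nx + ny - nc with hP
  have hbdd : ∀ t, P t → 1 ≤ t := by
    rintro t ⟨x, y, hxC, hyC, nx, ny, nc, hnx, hny, hnc, rfl⟩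
    have hx0 : x ≠ 0 := by
      intro h; rw [h, chi_zero hχ] at hnx; exact WithBot.bot_ne_coe hnx
    have hy0 : y ≠ 0 := by
      intro h; rw [h, chi_zero hχ] at hny; exact WithBot.bot_ne_coe hny
    have hlt := comm_lt hχ hχa hD hm hxC hyC hx0 hy0
    rw [hnc, hnx, hny, ← WithBot.coe_add, WithBot.coe_lt_coe] at hlt
    omega
  have hinh : ∃ t, P t := by
    obtain ⟨nb, hnb⟩ := chi_int hχ hb0
    obtain ⟨ncc, hncc⟩ := chi_int hχ hc0
    obtain ⟨nd, hnd⟩ := chi_int hχ hcomm0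
    exact ⟨nb + ncc - nd, b, c, hb, hc, nb, ncc, nd, hnb, hncc, hnd, rfl⟩
  obtain ⟨σ, hσP, hσmin⟩ := Int.exists_least_of_bdd ⟨1, hbdd⟩ hinh
  obtain ⟨x, y, hxC, hyC, nx, ny, nc, hnx, hny, hnc, hteq⟩ := hσP
  have hσ1 : 1 ≤ σ := hbdd σ ⟨x, y, hxC, hyC, nx, ny, nc, hnx, hny, hnc, hteq⟩
  have hx0 : x ≠ 0 := by
    intro h; rw [h, chi_zero hχ] at hnx; exact WithBot.bot_ne_coe hnx
  have hy0 : y ≠ 0 := by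
    intro h; rw [h, chi_zero hχ] at hny; exact WithBot.bot_ne_coe hny
  have hxyc0 : x*y - y*x ≠ 0 := by
    intro h; rw [h, chi_zero hχ] at hnc; exact WithBot.bot_ne_coe hnc
  -- minimality, repackaged
  have hmin : ∀ v w : S, v ∈ Subalgebra.centralizer K {a} →
      w ∈ Subalgebra.centralizer K {a} → ∀ nv nw : ℤ, χ v ≤ (nv : WithBot ℤ) →
      χ w ≤ (nw : WithBot ℤ) → χ (v * w - w * v) ≤ ((nv + nw - σ : ℤ) : WithBot ℤ) := by
    intro v w hv hw nv nw hvle hwle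
    by_cases h0 : v*w - w*v = 0
    · rw [h0, chi_zero hχ]; exact bot_le
    · have hv0 : v ≠ 0 := by rintro rfl; exact h0 (by simp)
      have hw0 : w ≠ 0 := by rintro rfl; exact h0 (by simp)
      obtain ⟨nv', hnv'⟩ := chi_int hχ hv0
      obtain ⟨nw', hnw'⟩ := chi_int hχ hw0
      obtain ⟨nc', hnc'⟩ := chi_int hχ h0
      have hσle := hσmin _ ⟨v, w, hv, hw, nv', nw', nc', hnv', hnw', hnc', rfl⟩
      rw [hnv', WithBot.coe_le_coe] at hvle
      rw [hnw', WithBot.coe_le_coe] at hwle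
      rw [hnc']
      exact WithBot.coe_le_coe.mpr (by omega)
  -- positivity of degrees
  have hnx0 : 0 ≤ nx := by
    have h1 := hD.1 x hxC hx0
    rw [hnx] at h1
    exact_mod_cast h1
  have hny0 : 0 ≤ ny := by
    have h1 := hD.1 y hyC hy0
    rw [hny] at h1
    exact_mod_cast h1
  have hA1 : 1 ≤ nx + ny := by
    by_contra hA
    have hxz : nx = 0 := by omega
    have := deg_zero_commutes hχ hχa hD hxC (by rw [hnx, hxz]) y
    exact hxyc0 (sub_eq_zero.mpr this)
  -- the auxiliary data for the additive pairing
  set k : ℕ := (nx + ny).toNat with hk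
  have hkZ : (k : ℤ) = nx + ny := Int.toNat_of_nonneg (by omega)
  set us : S := (x*y)^(m-1) * (x*y - y*x) with hus'
  have husC : us ∈ Subalgebra.centralizer K {a} :=
    mul_mem (pow_mem (mul_mem hxC hyC) _)
      (sub_mem (mul_mem hxC hyC) (mul_mem hyC hxC))
  have hxy0 : x*y ≠ 0 := mul_ne_zero' hχ hx0 hy0
  have hchixy : χ (x*y) = ((nx + ny : ℤ) : WithBot ℤ) := by
    rw [hχ.map_mul, hnx, hny, ← WithBot.coe_add]
  have hpowchi := chi_pow hχ hS hchixy (m-1)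
  have hpow0 : (x*y)^(m-1) ≠ 0 := by
    intro h; rw [h, chi_zero hχ] at hpowchi; exact WithBot.bot_ne_coe hpowchi
  have hus0 : us ≠ 0 := mul_ne_zero' hχ hpow0 hxyc0
  set s : ℤ := ((m-1 : ℕ) : ℤ) * (nx + ny) + nc with hs'
  have hsval : χ us = (s : WithBot ℤ) := by
    rw [hus', hχ.map_mul, hpowchi, hnc, ← WithBot.coe_add]
  have hm1 : ((m-1 : ℕ) : ℤ) = (m : ℤ) - 1 := by omega
  have hks : (k : ℤ) * m = s + σ := by
    rw [hkZ, hs', hteq, hm1]; ring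
  have hcommval : χ (x*y - y*x) = ((nx + ny - σ : ℤ) : WithBot ℤ) := by
    rw [hnc]; congr 1; omega
  have hgne := gg_ne_zero hχ hχa hD hσ1 husC hus0 hsval hks hmin hxC hyC hx0 hy0
    hnx hny hcommval
  -- the additive pairing is trivial
  set E : Set ℤ :=
    {n : ℤ | ∃ u : S, u ∈ Subalgebra.centralizer K {a} ∧ u ≠ 0 ∧ χ u = (n : WithBot ℤ)} with hE
  have hch : ∀ n : ℤ, ∃ u : S, n ∈ E →
      (u ∈ Subalgebra.centralizer K {a} ∧ u ≠ 0 ∧ χ u = (n : WithBot ℤ)) := by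
    intro n
    by_cases h : n ∈ E
    · obtain ⟨u, hu⟩ := h
      exact ⟨u, fun _ => hu⟩
    · exact ⟨1, fun hh => absurd hh h⟩
  choose uu huu using hch
  have h0E : (0:ℤ) ∈ E := ⟨1, one_mem _, one_ne_zero, chi_one hχ hS⟩
  have haddE : ∀ {s' t : ℤ}, s' ∈ E → t ∈ E → s' + t ∈ E := by
    rintro s' t ⟨u, hu, hu0, hus⟩ ⟨v, hv, hv0, hvt⟩
    exact ⟨u * v, mul_mem hu hv, mul_ne_zero' hχ hu0 hv0,
      by rw [hχ.map_mul, hus, hvt, ← WithBot.coe_add]⟩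
  have hmE : ((m:ℤ)) ∈ E := ⟨a, a_mem, a_ne_zero hχ hχa, hχa⟩
  set f : ℤ → ℤ → Multiplicative K :=
    fun n n' => Multiplicative.ofAdd (gg K χ a k us (uu n) (uu n')) with hf
  have hfl : ∀ {p q r : ℤ}, p ∈ E → q ∈ E → r ∈ E → f (p+q) r = f p r * f q r := by
    intro p q r hp hq hr
    obtain ⟨hmp, h0p, hep⟩ := huu p hp
    obtain ⟨hmq, h0q, heq⟩ := huu q hq
    obtain ⟨hmr, h0r, her⟩ := huu r hr
    obtain ⟨hmpq, h0pq, hepq⟩ := huu (p+q) (haddE hp hq)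
    simp only [hf, ← ofAdd_add]
    congr 1
    have hchimul : χ (uu p * uu q) = ((p + q : ℤ) : WithBot ℤ) := by
      rw [hχ.map_mul, hep, heq, ← WithBot.coe_add]
    rw [gg_congr_left hχ hχa hD hσ1 husC hus0 hsval hks hmin
      (mul_mem hmp hmq) hmpq hmr (mul_ne_zero' hχ h0p h0q) h0pq h0r
      hchimul hepq her rfl]
    exact gg_mul_left hχ hχa hD hσ1 husC hus0 hsval hks hmin
      hmp hmq hmr h0p h0q h0r hep heq her
  have hfr : ∀ {p q r : ℤ}, p ∈ E → q ∈ E → r ∈ E → f p (q+r) = f p q * f p r := by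
    intro p q r hp hq hr
    obtain ⟨hmp, h0p, hep⟩ := huu p hp
    obtain ⟨hmq, h0q, heq⟩ := huu q hq
    obtain ⟨hmr, h0r, her⟩ := huu r hr
    obtain ⟨hmqr, h0qr, heqr⟩ := huu (q+r) (haddE hq hr)
    simp only [hf, ← ofAdd_add]
    congr 1
    have hchimul : χ (uu q * uu r) = ((q + r : ℤ) : WithBot ℤ) := by
      rw [hχ.map_mul, heq, her, ← WithBot.coe_add]
    rw [gg_congr_right hχ hχa hD hσ1 husC hus0 hsval hks hmin
      hmp (mul_mem hmq hmr) hmqr h0p (mul_ne_zero' hχ h0q h0r) h0qr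
      hep hchimul heqr rfl]
    exact gg_mul_right hχ hχa hD hσ1 husC hus0 hsval hks hmin
      hmp hmq hmr h0p h0q h0r hep heq her
  have hdiag : ∀ {p : ℤ}, p ∈ E → f p p = 1 := by
    intro p hp
    obtain ⟨hmp, h0p, hep⟩ := huu p hp
    simp only [hf]
    rw [gg_self hχ hχa hD hσ1 husC hus0 hsval hks hmin hmp h0p]
    rfl
  have htriv : ∀ {p q : ℤ}, p ∈ E → q ∈ E → f p q = 1 :=
    pairing_trivial E h0E (fun {s' t} => haddE) (m:ℤ) hmE
      (by exact_mod_cast hm) f hfl hfr hdiag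
  -- contradiction
  have hnxE : nx ∈ E := ⟨x, hxC, hx0, hnx⟩
  have hnyE : ny ∈ E := ⟨y, hyC, hy0, hny⟩
  obtain ⟨hmx, h0x, hex⟩ := huu nx hnxE
  obtain ⟨hmy, h0y, hey⟩ := huu ny hnyE
  have hz : gg K χ a k us (uu nx) (uu ny) = 0 := by
    have h1 := htriv hnxE hnyE
    simp only [hf] at h1
    exact_mod_cast h1
  have e1 : gg K χ a k us x (uu ny) = gg K χ a k us x y :=
    gg_congr_right hχ hχa hD hσ1 husC hus0 hsval hks hmin
      hxC hyC hmy hx0 hy0 h0y hnx hny hey rfl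
  have e2 : gg K χ a k us (uu nx) (uu ny) = gg K χ a k us x (uu ny) :=
    gg_congr_left hχ hχa hD hσ1 husC hus0 hsval hks hmin
      hxC hmx hmy hx0 h0x h0y hnx hex hey rfl
  rw [e2, e1] at hz
  exact hgne hz
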